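/- Let Γ be a group acting on a group G by automorphisms, N a Γ-stable normal subgroup, and π¹ : H¹(Γ,G) → H¹(Γ,G/N) the induced map of pointed sets. Suppose κ is an infinite cardinal such that |H¹(Γ,G/N)| ≤ κ and for every 1-cocycle Φ : Γ → G, the twisted cohomology set H¹(Γ_Φ, N) has cardinality at most κ. Then |H¹(Γ,G)| ≤ κ. -/
import Mathlib


universe u

def IsCocycle {Γ G : Type*} [Group Γ] [Group G] [MulDistribMulAction Γ G]
    (Φ : Γ → G) : Prop :=
  ∀ σ τ : Γ, Φ (σ * τ) = Φ σ * σ • Φ τ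

def Cohomologous {Γ G : Type*} [Group Γ] [Group G] [MulDistribMulAction Γ G]
    (Φ Ψ : Γ → G) : Prop :=
  ∃ b : G, ∀ σ : Γ, Ψ σ = b⁻¹ * Φ σ * σ • b

/-- A cocycle with values in `G/N`, represented by a lift `Γ → G`. -/
def CocycleModN {Γ G : Type*} [Group Γ] [Group G] [MulDistribMulAction Γ G]
    (N : Subgroup G) (Φ : Γ → G) : Prop :=
  ∀ σ τ : Γ, (Φ (σ * τ))⁻¹ * (Φ σ * σ • Φ τ) ∈ N

/-- The cohomologous relation for `G/N`-valued cocycles, via lifts. -/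
def CohomologousModN {Γ G : Type*} [Group Γ] [Group G] [MulDistribMulAction Γ G]
    (N : Subgroup G) (Φ Ψ : Γ → G) : Prop :=
  ∃ b : G, ∀ σ : Γ, (Ψ σ)⁻¹ * (b⁻¹ * Φ σ * σ • b) ∈ N

/-- A cocycle for the `Φ`-twisted action, valued in `N`. -/
def TwCocycleN {Γ G : Type*} [Group Γ] [Group G] [MulDistribMulAction Γ G]
    (Φ : Γ → G) (N : Subgroup G) (Ψ : Γ → G) : Prop :=
  (∀ σ : Γ, Ψ σ ∈ N) ∧ ∀ σ τ : Γ, Ψ (σ * τ) = Ψ σ * (Φ σ * σ • Ψ τ * (Φ σ)⁻¹)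

/-- Cohomologous (via an element of `N`) for the `Φ`-twisted action. -/
def TwCohomologousN {Γ G : Type*} [Group Γ] [Group G] [MulDistribMulAction Γ G]
    (Φ : Γ → G) (N : Subgroup G) (Ψ Λ : Γ → G) : Prop :=
  ∃ b ∈ N, ∀ σ : Γ, Λ σ = b⁻¹ * Ψ σ * (Φ σ * σ • b * (Φ σ)⁻¹)

/-- `H¹(Γ,G)`. -/
def H1 (Γ G : Type u) [Group Γ] [Group G] [MulDistribMulAction Γ G] : Type u :=
  Quot (fun Φ Ψ : {f : Γ → G // IsCocycle f} => Cohomologous Φ.1 Ψ.1)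

/-- `H¹(Γ,G/N)` (via lifted cocycles). -/
def H1modN (Γ : Type u) {G : Type u} [Group Γ] [Group G] [MulDistribMulAction Γ G]
    (N : Subgroup G) : Type u :=
  Quot (fun Φ Ψ : {f : Γ → G // CocycleModN N f} => CohomologousModN N Φ.1 Ψ.1)

/-- `H¹(Γ_Φ,N)`, the twisted cohomology set. -/
def H1twN {Γ G : Type u} [Group Γ] [Group G] [MulDistribMulAction Γ G]
    (Φ : Γ → G) (N : Subgroup G) : Type u :=
  Quot (fun Ψ Λ : {f : Γ → G // TwCocycleN Φ N f} => TwCohomologousN Φ N Ψ.1 Λ.1)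


section Aux

variable {Γ G : Type u} [Group Γ] [Group G] [MulDistribMulAction Γ G]

/-- A genuine cocycle is a cocycle mod `N`. -/
theorem IsCocycle.cocycleModN (N : Subgroup G) {Φ : Γ → G} (h : IsCocycle Φ) :
    CocycleModN N Φ := fun σ τ => by
  rw [h σ τ, inv_mul_cancel]; exact N.one_mem

/-- Cohomologous cocycles are cohomologous mod `N`. -/
theorem Cohomologous.modN (N : Subgroup G) {Φ Ψ : Γ → G}
    (h : Cohomologous Φ Ψ) : CohomologousModN N Φ Ψ := by
  obtain ⟨b, hb⟩ := h
  exact ⟨b, fun σ => by rw [hb σ, inv_mul_cancel]; exact N.one_mem⟩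

/-- `CohomologousModN` is an equivalence relation on cocycles mod `N`. -/
theorem cohModN_equiv (N : Subgroup G) [hN : N.Normal] :
    Equivalence (fun Φ Ψ : {f : Γ → G // CocycleModN N f} =>
      CohomologousModN N Φ.1 Ψ.1) := by
  constructor
  · intro Φ
    exact ⟨1, fun σ => by simpa using N.one_mem⟩
  · rintro Φ Ψ ⟨b, hb⟩
    refine ⟨b⁻¹, fun σ => ?_⟩
    have h := hN.conj_mem _ (N.inv_mem (hb σ)) (σ • b)
    have e : (Φ.1 σ)⁻¹ * (b⁻¹⁻¹ * Ψ.1 σ * σ • b⁻¹) =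
        (σ • b) * ((Ψ.1 σ)⁻¹ * (b⁻¹ * Φ.1 σ * σ • b))⁻¹ * (σ • b)⁻¹ := by
      rw [smul_inv']; group
    rw [e]; exact h
  · rintro Φ Ψ Λ ⟨b, hb⟩ ⟨b', hb'⟩
    refine ⟨b * b', fun σ => ?_⟩
    have h := N.mul_mem (hb' σ) (hN.conj_mem _ (hb σ) (σ • b')⁻¹)
    have e : (Λ.1 σ)⁻¹ * ((b * b')⁻¹ * Φ.1 σ * σ • (b * b')) =
        ((Λ.1 σ)⁻¹ * (b'⁻¹ * Ψ.1 σ * σ • b')) *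
        ((σ • b')⁻¹ * ((Ψ.1 σ)⁻¹ * (b⁻¹ * Φ.1 σ * σ • b)) * ((σ • b')⁻¹)⁻¹) := by
      rw [smul_mul']; group
    rw [e]; exact h

end Aux

/-- If `|H¹(Γ,G/N)| ≤ κ` and `|H¹(Γ_Φ,N)| ≤ κ` for every cocycle `Φ`, with `κ`
infinite, then `|H¹(Γ,G)| ≤ κ`. -/
theorem card_H1_le {Γ G : Type u} [Group Γ] [Group G] [MulDistribMulAction Γ G]
    (N : Subgroup G) [N.Normal] (hstab : ∀ (σ : Γ), ∀ n ∈ N, σ • n ∈ N)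
    (κ : Cardinal.{u}) (hκ : Cardinal.aleph0 ≤ κ)
    (h1 : Cardinal.mk (H1modN Γ N) ≤ κ)
    (h2 : ∀ Φ : Γ → G, IsCocycle Φ → Cardinal.mk (H1twN Φ N) ≤ κ) :
    Cardinal.mk (H1 Γ G) ≤ κ := by
  classical
  have hN : N.Normal := inferInstance
  -- the projection π¹ : H¹(Γ,G) → H¹(Γ,G/N)
  let f : H1 Γ G → H1modN Γ N :=
    Quot.map (fun Φ => ⟨Φ.1, Φ.2.cocycleModN N⟩) (fun Φ Ψ hp => hp.modN N)
  have hfib : ∀ c : H1modN Γ N, Cardinal.mk {x : H1 Γ G // f x = c} ≤ κ := by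
    intro c
    by_cases hc : Nonempty {x : H1 Γ G // f x = c}
    · obtain ⟨⟨x, hx⟩⟩ := hc
      obtain ⟨⟨Φ, hΦ⟩, rfl⟩ := Quot.exists_rep x
      -- twisted cocycles give genuine cocycles
      have key : ∀ Ψ : {h : Γ → G // TwCocycleN Φ N h},
          IsCocycle (fun σ => Ψ.1 σ * Φ σ) := by
        intro ⟨Ψ, hΨmem, hΨ⟩ σ τ
        show Ψ (σ * τ) * Φ (σ * τ) = Ψ σ * Φ σ * σ • (Ψ τ * Φ τ)
        rw [hΨ σ τ, hΦ σ τ, smul_mul']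
        group
      -- the twisting map into the fibre of f over c
      let g : {h : Γ → G // TwCocycleN Φ N h} → {x : H1 Γ G // f x = c} :=
        fun Ψ => ⟨Quot.mk _ ⟨fun σ => Ψ.1 σ * Φ σ, key Ψ⟩, by
          rw [← hx]
          show Quot.mk _ _ = Quot.mk _ _
          refine (Quot.sound ?_).symm
          refine ⟨1, fun σ => ?_⟩
          have e : (Ψ.1 σ * Φ σ)⁻¹ * ((1 : G)⁻¹ * Φ σ * σ • (1 : G)) =
              (Φ σ)⁻¹ * (Ψ.1 σ)⁻¹ * ((Φ σ)⁻¹)⁻¹ := by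
            rw [smul_one]; group
          rw [e]
          exact hN.conj_mem _ (N.inv_mem (Ψ.2.1 σ)) (Φ σ)⁻¹⟩
      have gsound : ∀ Ψ Λ : {h : Γ → G // TwCocycleN Φ N h},
          TwCohomologousN Φ N Ψ.1 Λ.1 → g Ψ = g Λ := by
        intro Ψ Λ ⟨b, hbN, hb⟩
        apply Subtype.ext
        show Quot.mk _ _ = Quot.mk _ _
        refine Quot.sound ⟨b, fun σ => ?_⟩
        show Λ.1 σ * Φ σ = b⁻¹ * (Ψ.1 σ * Φ σ) * σ • b
        rw [hb σ]; group
      let g' : H1twN Φ N → {x : H1 Γ G // f x = c} := Quot.lift g gsound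
      have hsurj : Function.Surjective g' := by
        rintro ⟨y, hy⟩
        obtain ⟨⟨Θ, hΘ⟩, rfl⟩ := Quot.exists_rep y
        have heq : (Quot.mk _ ⟨Θ, hΘ.cocycleModN N⟩ : H1modN Γ N)
            = Quot.mk _ ⟨Φ, hΦ.cocycleModN N⟩ := hy.trans hx.symm
        obtain ⟨b, hb⟩ := ((cohModN_equiv N).eqvGen_iff).mp (Quot.eq.mp heq)
        -- hb σ : (Φ σ)⁻¹ * (b⁻¹ * Θ σ * σ • b) ∈ N
        have hb' : ∀ σ : Γ, (Φ σ)⁻¹ * (b⁻¹ * Θ σ * σ • b) ∈ N := hb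
        have hmem : ∀ σ : Γ, b⁻¹ * Θ σ * σ • b * (Φ σ)⁻¹ ∈ N := by
          intro σ
          have e : b⁻¹ * Θ σ * σ • b * (Φ σ)⁻¹ =
              Φ σ * ((Φ σ)⁻¹ * (b⁻¹ * Θ σ * σ • b)) * (Φ σ)⁻¹ := by group
          rw [e]
          exact hN.conj_mem _ (hb' σ) (Φ σ)
        have hcoc : ∀ σ τ : Γ,
            b⁻¹ * Θ (σ * τ) * (σ * τ) • b * (Φ (σ * τ))⁻¹ =
            b⁻¹ * Θ σ * σ • b * (Φ σ)⁻¹ *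
              (Φ σ * σ • (b⁻¹ * Θ τ * τ • b * (Φ τ)⁻¹) * (Φ σ)⁻¹) := by
          intro σ τ
          rw [hΘ σ τ, hΦ σ τ, mul_smul σ τ b, smul_mul', smul_mul', smul_mul',
            smul_inv', smul_inv']
          group
        refine ⟨Quot.mk _ ⟨fun σ => b⁻¹ * Θ σ * σ • b * (Φ σ)⁻¹,
          hmem, hcoc⟩, ?_⟩
        apply Subtype.ext
        have hsound : (Quot.mk
              (fun Φ' Ψ' : {f : Γ → G // IsCocycle f} => Cohomologous Φ'.1 Ψ'.1)
              ⟨Θ, hΘ⟩)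
            = Quot.mk _ ⟨fun σ => b⁻¹ * Θ σ * σ • b * (Φ σ)⁻¹ * Φ σ,
                key ⟨fun σ => b⁻¹ * Θ σ * σ • b * (Φ σ)⁻¹, hmem, hcoc⟩⟩ :=
          Quot.sound ⟨b, fun σ => by
            show b⁻¹ * Θ σ * σ • b * (Φ σ)⁻¹ * Φ σ = b⁻¹ * Θ σ * σ • b
            group⟩
        have hred : g' (Quot.mk _ ⟨fun σ => b⁻¹ * Θ σ * σ • b * (Φ σ)⁻¹, hmem, hcoc⟩)
            = g ⟨fun σ => b⁻¹ * Θ σ * σ • b * (Φ σ)⁻¹, hmem, hcoc⟩ := rfl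
        rw [hred]
        exact hsound.symm
      exact le_trans (Cardinal.mk_le_of_surjective hsurj) (h2 Φ hΦ)
    · rw [not_nonempty_iff] at hc
      simp [Cardinal.mk_eq_zero]
  calc Cardinal.mk (H1 Γ G)
      = Cardinal.mk (Σ c : H1modN Γ N, {x : H1 Γ G // f x = c}) :=
        Cardinal.mk_congr (Equiv.sigmaFiberEquiv f).symm
    _ = Cardinal.sum (fun c => Cardinal.mk {x : H1 Γ G // f x = c}) :=
        Cardinal.mk_sigma _
    _ ≤ Cardinal.sum (fun _ : H1modN Γ N => κ) := Cardinal.sum_le_sum _ _ hfib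
    _ = Cardinal.mk (H1modN Γ N) * κ := Cardinal.sum_const' _ _
    _ ≤ κ * κ := mul_le_mul' h1 le_rfl
    _ = κ := Cardinal.mul_eq_self hκ
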